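/- A one-dimensional continuous probability distribution with continuous strictly increasing CDF admits at most one differentiable measure-preserving automorphism other than the identity. -/

import Mathlib

open MeasureTheory Set

theorem aux_atomless (p : Measure ℝ) [IsProbabilityMeasure p]
    (F : ℝ → ℝ) (hFdef : ∀ x, F x = (p (Iic x)).toReal)
    (hFcont : Continuous F) (x : ℝ) : p {x} = 0 := by
  have hfin : ∀ s : Set ℝ, p s ≠ ⊤ := fun s => (measure_lt_top p s).ne
  have key : ∀ y < x, (p {x}).toReal ≤ F x - F y := by
    intro y hy
    have h1 : p {x} ≤ p (Ioc y x) := measure_mono (by simp [hy])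
    have h2 : p (Ioc y x) = p (Iic x) - p (Iic y) := by
      rw [← measure_diff (Iic_subset_Iic.2 hy.le) measurableSet_Iic.nullMeasurableSet (hfin _)]
      congr 1
      ext z; simp [and_comm]
    have h3 : (p (Ioc y x)).toReal = F x - F y := by
      rw [h2, hFdef, hFdef, ENNReal.toReal_sub_of_le (measure_mono (Iic_subset_Iic.2 hy.le)) (hfin _)]
    calc (p {x}).toReal ≤ (p (Ioc y x)).toReal := ENNReal.toReal_mono (hfin _) h1
    _ = F x - F y := h3
  have hlim : Filter.Tendsto (fun y => F x - F y) (nhdsWithin x (Iio x)) (nhds (F x - F x)) :=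
    (tendsto_const_nhds.sub (hFcont.tendsto x)).mono_left nhdsWithin_le_nhds
  have : (p {x}).toReal ≤ F x - F x := by
    refine ge_of_tendsto hlim ?_
    filter_upwards [self_mem_nhdsWithin] with y hy using key y hy
  simp only [sub_self] at this
  have h0 : (p {x}).toReal = 0 := le_antisymm this ENNReal.toReal_nonneg
  exact (ENNReal.toReal_eq_zero_iff _).mp h0 |>.resolve_right (hfin _)

theorem aux_key (p : Measure ℝ) [IsProbabilityMeasure p]
    (F : ℝ → ℝ) (hFdef : ∀ x, F x = (p (Iic x)).toReal)
    (hFcont : Continuous F) (hFmono : StrictMono F)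
    (m : ℝ → ℝ) (hmdiff : Differentiable ℝ m) (hmbij : Function.Bijective m)
    (hm : Measure.map m p = p) (hmne : m ≠ id) (x : ℝ) :
    F (m x) = 1 - F x := by
  have hfin : ∀ s : Set ℝ, p s ≠ ⊤ := fun s => (measure_lt_top p s).ne
  have hmc : Continuous m := hmdiff.continuous
  rcases hmc.strictMono_of_inj hmbij.1 with hmono | hanti
  · -- m is strictly monotone: then m = id, contradiction
    exfalso
    apply hmne
    funext y
    have : p (Iic (m y)) = p (Iic y) := by
      conv_lhs => rw [← hm, Measure.map_apply hmc.measurable measurableSet_Iic]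
      congr 1
      ext z; simp [hmono.le_iff_le]
    have : F (m y) = F y := by rw [hFdef, hFdef, this]
    exact hFmono.injective this
  · -- m strictly anti
    have h1 : p (Iic (m x)) = p (Ici x) := by
      conv_lhs => rw [← hm, Measure.map_apply hmc.measurable measurableSet_Iic]
      congr 1
      ext z
      simp [hanti.le_iff_ge]
    have hatom := aux_atomless p F hFdef hFcont x
    have h2 : p (Ici x) + p (Iic x) = 1 := by
      have : p (Ici x) + p (Iio x) = 1 := by
        rw [← compl_Ici (a := x)]
        rw [measure_add_measure_compl measurableSet_Ici, measure_univ]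
      have hIic : p (Iic x) = p (Iio x) := by
        rw [← Iio_union_right, measure_union (by simp) (measurableSet_singleton x), hatom, add_zero]
      rw [hIic]; exact this
    rw [hFdef, hFdef, h1]
    have := congrArg ENNReal.toReal h2
    rw [ENNReal.toReal_add (hfin _) (hfin _)] at this
    simp at this
    linarith

theorem stmt_4 (p : Measure ℝ) [IsProbabilityMeasure p]
    (F : ℝ → ℝ)
    (hFdef : ∀ x, F x = (p (Iic x)).toReal)
    (hFcont : Continuous F) (hFmono : StrictMono F)
    (m₁ m₂ : ℝ → ℝ)
    (hm₁diff : Differentiable ℝ m₁) (hm₁bij : Function.Bijective m₁)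
    (hm₁ : Measure.map m₁ p = p) (hm₁ne : m₁ ≠ id)
    (hm₂diff : Differentiable ℝ m₂) (hm₂bij : Function.Bijective m₂)
    (hm₂ : Measure.map m₂ p = p) (hm₂ne : m₂ ≠ id) :
    m₁ = m₂ := by
  funext x
  apply hFmono.injective
  rw [aux_key p F hFdef hFcont hFmono m₁ hm₁diff hm₁bij hm₁ hm₁ne x,
      aux_key p F hFdef hFcont hFmono m₂ hm₂diff hm₂bij hm₂ hm₂ne x]
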